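/- Let n ≥ 2, let e₁ = (1,0,…,0) ∈ ℝ^n, and let Γ₊ = {ξ ∈ ℝ^n \ {0} : ξ·e₁ > −|ξ|/√2}. There exists a map R : Γ₊ → SO(n) (real special orthogonal n×n matrices) such that: (i) each matrix entry r_{jk} : Γ₊ → ℝ is smooth; (ii) R is homogeneous of degree zero, i.e., R(cξ) = R(ξ) for all c > 0 and ξ ∈ Γ₊; (iii) R(ξ)ᵗ ξ = |ξ| e₁ for all ξ ∈ Γ₊; and (iv) for every multi-index α ∈ ℕ₀^n there is a constant C_α with |∂^α_ξ r_{jk}(ξ)| ≤ C_α |ξ|^{−|α|} for all ξ ∈ Γ₊ and all 1 ≤ j, k ≤ n. The analogous statement holds on Γ₋ = {ξ ≠ 0 : ξ·e₁ < |ξ|/√2} with (iii) replaced by R(ξ)ᵗ ξ = −|ξ| e₁. -/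

import Mathlib

noncomputable section
open MeasureTheory Matrix
open scoped ENNReal NNReal

namespace Elastic

/-- Euclidean space `ℝⁿ`. -/
abbrev Rn (n : ℕ) := EuclideanSpace ℝ (Fin n)

/-- Complex vector fields take values in `ℂⁿ`. -/
abbrev Cvec (n : ℕ) := Fin n → ℂ

variable {n : ℕ}

/-- The dot product `x · ξ` on `ℝⁿ`. -/
def dotR (x ξ : Rn n) : ℝ := ∑ j, x j * ξ j

/-- Componentwise Fourier transform `f̂(ξ) = ∫ e^{-i x·ξ} f(x) dx`. -/
def ftrans (f : Rn n → Cvec n) (ξ : Rn n) : Cvec n :=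
  ∫ x : Rn n, Complex.exp (-(Complex.I * (dotR x ξ : ℝ))) • f x

/-- The symbol `L(ξ) = μ|ξ|² Iₙ + (λ+μ) ξξᵗ` of the Lamé operator `-Δ*`. -/
def lameSymbol (lam mu : ℝ) (ξ : Rn n) : Matrix (Fin n) (Fin n) ℝ :=
  (mu * ‖ξ‖ ^ 2) • (1 : Matrix (Fin n) (Fin n) ℝ) +
    (lam + mu) • Matrix.of fun i j => ξ i * ξ j

open Classical in
/-- The positive semidefinite square root `√L(ξ)` of the symbol `L(ξ)`
(defined to be `0` in the degenerate case where `L(ξ)` fails to be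
positive semidefinite; under the standing assumptions `μ > 0`, `λ + 2μ > 0`
the symbol is always positive semidefinite, and positive definite for `ξ ≠ 0`). -/
def lameSqrt (lam mu : ℝ) (ξ : Rn n) : Matrix (Fin n) (Fin n) ℝ :=
  if h : (lameSymbol lam mu ξ).PosSemidef then
    (h.1.eigenvectorUnitary : Matrix (Fin n) (Fin n) ℝ) *
      Matrix.diagonal (Real.sqrt ∘ h.1.eigenvalues) *
      star (h.1.eigenvectorUnitary : Matrix (Fin n) (Fin n) ℝ) else 0

/-- The complexified square-root symbol. -/
def cS (lam mu : ℝ) (ξ : Rn n) : Matrix (Fin n) (Fin n) ℂ :=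
  (lameSqrt lam mu ξ).map (fun a => (a : ℂ))

/-- The matrix symbol `exp(it √L(ξ))` (matrix exponential). -/
def expSym (lam mu t : ℝ) (ξ : Rn n) : Matrix (Fin n) (Fin n) ℂ :=
  NormedSpace.exp ((Complex.I * (t : ℂ)) • cS lam mu ξ)

/-- The matrix symbol `cos(t √L(ξ))`. -/
def cosSym (lam mu t : ℝ) (ξ : Rn n) : Matrix (Fin n) (Fin n) ℂ :=
  (2 : ℂ)⁻¹ • (expSym lam mu t ξ + expSym lam mu (-t) ξ)

/-- The matrix symbol `sin(t √L(ξ)) (√L(ξ))⁻¹`. -/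
def sincSym (lam mu t : ℝ) (ξ : Rn n) : Matrix (Fin n) (Fin n) ℂ :=
  ((2 * Complex.I)⁻¹ • (expSym lam mu t ξ - expSym lam mu (-t) ξ)) * (cS lam mu ξ)⁻¹

/-- Fourier multiplier operator with matrix-valued symbol `m`:
`(m(D)f)(x) = (2π)^{-n} ∫ e^{i x·ξ} m(ξ) f̂(ξ) dξ`. -/
def mulOp (m : Rn n → Matrix (Fin n) (Fin n) ℂ) (f : Rn n → Cvec n) (x : Rn n) : Cvec n :=
  (((2 * Real.pi) ^ n : ℝ)⁻¹) •
    ∫ ξ : Rn n, Complex.exp (Complex.I * (dotR x ξ : ℝ)) • (m ξ).mulVec (ftrans f ξ)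

/-- The scalar symbol `|ξ|^σ` of `|∇|^σ`, as a (diagonal) matrix symbol. -/
def absGradSym (σ : ℝ) (ξ : Rn n) : Matrix (Fin n) (Fin n) ℂ :=
  ((‖ξ‖ ^ σ : ℝ) : ℂ) • (1 : Matrix (Fin n) (Fin n) ℂ)

/-- Componentwise `Lᵖ` norm of a vector field:
`‖h‖_{L^r} = (∑ⱼ ‖hⱼ‖_{L^r}^r)^{1/r}` for `r < ∞`, and `maxⱼ ‖hⱼ‖_{L^∞}` for `r = ∞`. -/
def vecLp {α : Type*} [MeasurableSpace α] (μ : Measure α) (r : ℝ≥0∞)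
    (h : α → Cvec n) : ℝ≥0∞ :=
  if r = ∞ then ⨆ j, eLpNorm (fun x => h x j) ∞ μ
  else (∑ j, eLpNorm (fun x => h x j) r μ ^ r.toReal) ^ r.toReal⁻¹

/-- `L^q` norm in the time variable of an `ℝ≥0∞`-valued quantity. -/
def timeLp (q : ℝ≥0∞) (g : ℝ → ℝ≥0∞) : ℝ≥0∞ :=
  if q = ∞ then essSup g volume
  else (∫⁻ t : ℝ, g t ^ q.toReal) ^ q.toReal⁻¹

/-- The mixed norm `‖u‖_{L^q_t L^r_x}`. -/
def mixed (q r : ℝ≥0∞) (u : ℝ → Rn n → Cvec n) : ℝ≥0∞ :=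
  timeLp q fun t => vecLp volume r (u t)

/-- The mixed norm `‖u‖_{L^q_t Ḣ^σ_r} = ‖ ‖|∇|^σ u(t,·)‖_{L^r} ‖_{L^q_t}`. -/
def mixedSob (q : ℝ≥0∞) (σ : ℝ) (r : ℝ≥0∞) (u : ℝ → Rn n → Cvec n) : ℝ≥0∞ :=
  timeLp q fun t => vecLp volume r (mulOp (absGradSym σ) (u t))

/-- The homogeneous Sobolev norm `‖f‖_{Ḣ^s} = ‖ |ξ|^s f̂(ξ) ‖_{L²_ξ}`. -/
def sobNorm (s : ℝ) (f : Rn n → Cvec n) : ℝ≥0∞ :=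
  (∫⁻ ξ : Rn n, (ENNReal.ofReal (‖ξ‖ ^ s)) ^ 2 *
      ∑ j, ((‖ftrans f ξ j‖₊ : ℝ≥0∞)) ^ 2) ^ (2⁻¹ : ℝ)

/-- The reciprocal `1/q` of an exponent `q ∈ [1,∞]`, as a real number. -/
def rcp (q : ℝ≥0∞) : ℝ := q.toReal⁻¹

/-- The conjugate exponent `q'`, `1/q + 1/q' = 1`. -/
def dualExp (q : ℝ≥0∞) : ℝ≥0∞ := ENNReal.ofReal (1 - rcp q)⁻¹

/-- `(q,r)` is wave-admissible: `q, r ≥ 2`, `r ≠ ∞`, `(q,r,n) ≠ (2,∞,3)` and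
`1/q ≤ ((n-1)/2)(1/2 - 1/r)`. -/
def WaveAdmissible (n : ℕ) (q r : ℝ≥0∞) : Prop :=
  2 ≤ q ∧ 2 ≤ r ∧ r ≠ ∞ ∧ ¬(q = 2 ∧ r = ∞ ∧ n = 3) ∧
    rcp q ≤ ((n : ℝ) - 1) / 2 * (1 / 2 - rcp r)

/-- `(q,r)` is wave-acceptable. -/
def WaveAcceptable (n : ℕ) (q r : ℝ≥0∞) : Prop :=
  (1 ≤ q ∧ q ≠ ∞ ∧ 2 ≤ r ∧ rcp q < ((n : ℝ) - 1) * (1 / 2 - rcp r)) ∨ (q = ∞ ∧ r = 2)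

/-- The Duhamel term `∫₀ᵗ sin((t-s)√(-Δ*)) (√(-Δ*))⁻¹ F(s,·) ds`. -/
def duhamel (lam mu : ℝ) (F : ℝ → Rn n → Cvec n) (t : ℝ) (x : Rn n) : Cvec n :=
  ∫ s in (0 : ℝ)..t, mulOp (sincSym lam mu (t - s)) (F s) x

/-- The solution of the inhomogeneous elastic wave equation with data `(f,g)`
and forcing term `F`, given by Duhamel's formula. -/
def waveSol (lam mu : ℝ) (f g : Rn n → Cvec n) (F : ℝ → Rn n → Cvec n)
    (t : ℝ) (x : Rn n) : Cvec n :=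
  mulOp (cosSym lam mu t) f x + mulOp (sincSym lam mu t) g x + duhamel lam mu F t x

/-- Frobenius norm `|A| = (∑_{i,j} |A_{ij}|²)^{1/2}` of a complex matrix. -/
def frob (A : Matrix (Fin n) (Fin n) ℂ) : ℝ := Real.sqrt (∑ i, ∑ j, ‖A i j‖ ^ 2)

/-- The Fefferman–Phong norm
`‖V‖_{F^p} = sup_{x, ρ>0} ρ^{2-n/p} (∫_{B(x,ρ)} |V(y)|^p dy)^{1/p}`. -/
def fpNorm (p : ℝ) (V : Rn n → Matrix (Fin n) (Fin n) ℂ) : ℝ≥0∞ :=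
  ⨆ (x : Rn n) (ρ : ℝ) (_ : 0 < ρ),
    ENNReal.ofReal (ρ ^ (2 - (n : ℝ) / p)) *
      (∫⁻ y in Metric.ball x ρ, ENNReal.ofReal (frob (V y) ^ p)) ^ p⁻¹

/-- Weighted space-time `L²` norm `( ∫∫ |u(t,x)|² w(x) dx dt )^{1/2}`, where
`|u(t,x)|` is the euclidean norm on `ℂⁿ`. -/
def wtL2 (w : Rn n → ℝ≥0∞) (u : ℝ → Rn n → Cvec n) : ℝ≥0∞ :=
  (∫⁻ t : ℝ, ∫⁻ x : Rn n, (∑ j, ((‖u t x j‖₊ : ℝ≥0∞)) ^ 2) * w x) ^ (2⁻¹ : ℝ)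

/-- The weight `x ↦ |V(x)|` associated to a matrix potential. -/
def vWeight (V : Rn n → Matrix (Fin n) (Fin n) ℂ) (x : Rn n) : ℝ≥0∞ :=
  ENNReal.ofReal (frob (V x))

/-! ### The elastic wave operator as a differential operator -/

/-- Spatial partial derivative `∂/∂x_i`. -/
def pdSpace (i : Fin n) (g : Rn n → ℂ) (x : Rn n) : ℂ :=
  fderiv ℝ g x (EuclideanSpace.single i (1 : ℝ))

/-- The Lamé operator `Δ* v = μ Δ v + (λ+μ) ∇ div v`. -/
def lameOp (lam mu : ℝ) (v : Rn n → Cvec n) (x : Rn n) : Cvec n := fun j =>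
  (mu : ℂ) * ∑ i, pdSpace i (fun y => pdSpace i (fun z => v z j) y) x +
    ((lam + mu : ℝ) : ℂ) * pdSpace j (fun y => ∑ i, pdSpace i (fun z => v z i) y) x

/-- The operator `(∂ₜ² - Δ* + a ∂ₜ - z) u` on space-time `ℝ × ℝⁿ`. -/
def elasticOp (lam mu : ℝ) (a z : ℂ) (u : ℝ × Rn n → Cvec n) (p : ℝ × Rn n) : Cvec n :=
  fun j =>
    deriv (fun t => deriv (fun s => u (s, p.2) j) t) p.1 -
      lameOp lam mu (fun x => u (p.1, x)) p.2 j +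
      a * deriv (fun t => u (t, p.2) j) p.1 - z * u p j

/-! ### Rotations in the frequency space -/

/-- The first standard basis vector `e₁` of `ℝⁿ`. -/
def e1 (n : ℕ) : Fin n → ℝ := fun i => if (i : ℕ) = 0 then 1 else 0

/-- The cone `Γ₊ = {ξ ≠ 0 : ξ·e₁ > -|ξ|/√2}`. -/
def coneP (n : ℕ) : Set (Rn n) :=
  {ξ | ξ ≠ 0 ∧ -(‖ξ‖ / Real.sqrt 2) < ∑ i, ξ i * e1 n i}

/-- The cone `Γ₋ = {ξ ≠ 0 : ξ·e₁ < |ξ|/√2}`. -/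
def coneM (n : ℕ) : Set (Rn n) :=
  {ξ | ξ ≠ 0 ∧ ∑ i, ξ i * e1 n i < ‖ξ‖ / Real.sqrt 2}

/-- `R : Γ → SO(n)` is a smooth degree-zero homogeneous family of rotations with
`R(ξ)ᵗ ξ = ε|ξ| e₁` and Mikhlin-type bounds `|∂^α r_{jk}(ξ)| ≤ C_α |ξ|^{-|α|}`
(the latter encoded via iterated derivatives within `Γ`). -/
def IsNiceRotation (Γ : Set (Rn n)) (ε : ℝ) (R : Rn n → Matrix (Fin n) (Fin n) ℝ) : Prop :=
  (∀ j k : Fin n, ContDiffOn ℝ ((⊤ : ℕ∞) : WithTop ℕ∞) (fun ξ => R ξ j k) Γ) ∧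
  (∀ c : ℝ, 0 < c → ∀ ξ ∈ Γ, R (c • ξ) = R ξ) ∧
  (∀ ξ ∈ Γ, (R ξ)ᵀ * R ξ = 1 ∧ (R ξ).det = 1) ∧
  (∀ ξ ∈ Γ, (R ξ)ᵀ.mulVec (fun i => ξ i) = (ε * ‖ξ‖) • e1 n) ∧
  (∀ k : ℕ, ∃ C : ℝ, ∀ ξ ∈ Γ, ∀ j l : Fin n,
    ‖iteratedFDerivWithin ℝ k (fun ζ => R ζ j l) Γ ξ‖ ≤ C * ‖ξ‖ ^ (-(k : ℝ)))

/-- The projection `𝒫 f = ℱ⁻¹[φ(ξ/|ξ|) f̂]`. -/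
def projOp (φ : Rn n → ℝ) (f : Rn n → Cvec n) : Rn n → Cvec n :=
  mulOp (fun ξ => ((φ (‖ξ‖⁻¹ • ξ) : ℝ) : ℂ) • (1 : Matrix (Fin n) (Fin n) ℂ)) f

/-- The operator `R(D) 𝒫 f = ℱ⁻¹[R(ξ) φ(ξ/|ξ|) f̂]`. -/
def rotProjOp (R : Rn n → Matrix (Fin n) (Fin n) ℝ) (φ : Rn n → ℝ)
    (f : Rn n → Cvec n) : Rn n → Cvec n :=
  mulOp (fun ξ => ((φ (‖ξ‖⁻¹ • ξ) : ℝ) : ℂ) • (R ξ).map (fun a => (a : ℂ))) f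


/-- Householder reflection. -/
def hhm (v : Fin n → ℝ) : Matrix (Fin n) (Fin n) ℝ :=
  1 - (2 / ∑ i, v i * v i) • Matrix.vecMulVec v v

def rotW (ε : ℝ) (ξ : Rn n) : Fin n → ℝ := fun i => ξ i + ε * ‖ξ‖ * e1 n i

def Rot (ε : ℝ) (ξ : Rn n) : Matrix (Fin n) (Fin n) ℝ :=
  hhm (rotW ε ξ) * hhm (e1 n)

lemma sum_e1 (hn : 0 < n) : ∑ i, e1 n i * e1 n i = 1 := by
  have h : ∀ i : Fin n, e1 n i * e1 n i = if i = (⟨0, hn⟩ : Fin n) then 1 else 0 := by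
    intro i
    simp only [e1, Fin.ext_iff]
    split <;> simp_all
  rw [Finset.sum_congr rfl fun i _ => h i, Finset.sum_ite_eq' Finset.univ]
  simp

lemma sum_sq_norm (ξ : Rn n) : ∑ i, ξ i * ξ i = ‖ξ‖ ^ 2 := by
  rw [EuclideanSpace.norm_eq, Real.sq_sqrt (by positivity)]
  exact Finset.sum_congr rfl fun i _ => by rw [Real.norm_eq_abs, sq_abs, sq]

lemma hhm_transpose (v : Fin n → ℝ) : (hhm v)ᵀ = hhm v := by
  unfold hhm
  rw [Matrix.transpose_sub, Matrix.transpose_one, Matrix.transpose_smul]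
  congr 1
  ext i j
  simp [Matrix.vecMulVec_apply, mul_comm]

lemma hhm_mul_self {v : Fin n → ℝ} (h : ∑ i, v i * v i ≠ 0) : hhm v * hhm v = 1 := by
  have hMM : Matrix.vecMulVec v v * Matrix.vecMulVec v v
      = (∑ i, v i * v i) • Matrix.vecMulVec v v := by
    ext i j
    simp only [Matrix.mul_apply, Matrix.vecMulVec_apply, Matrix.smul_apply, smul_eq_mul]
    calc ∑ x, v i * v x * (v x * v j) = ∑ x, (v x * v x) * (v i * v j) :=
          Finset.sum_congr rfl fun x _ => by ring
      _ = (∑ x, v x * v x) * (v i * v j) := (Finset.sum_mul _ _ _).symm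
  have h1 : 2 / (∑ i, v i * v i) * (2 / (∑ i, v i * v i) * (∑ i, v i * v i))
      = 2 / (∑ i, v i * v i) + 2 / (∑ i, v i * v i) := by field_simp; ring
  unfold hhm
  simp only [sub_mul, mul_sub, one_mul, mul_one, Matrix.smul_mul, Matrix.mul_smul, hMM,
    smul_smul, h1, add_smul]
  abel

lemma hhm_mulVec (v x : Fin n → ℝ) :
    (hhm v).mulVec x = x - ((2 * ∑ i, v i * x i) / ∑ i, v i * v i) • v := by
  funext j
  simp only [hhm, Matrix.mulVec, dotProduct, Matrix.sub_apply, Matrix.smul_apply,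
    Matrix.one_apply, Matrix.vecMulVec_apply, smul_eq_mul, Pi.sub_apply, Pi.smul_apply,
    sub_mul]
  rw [Finset.sum_sub_distrib]
  have h1 : ∑ l, (if j = l then (1:ℝ) else 0) * x l = x j := by simp
  have h2 : ∑ l, 2 / (∑ i, v i * v i) * (v j * v l) * x l
      = 2 / (∑ i, v i * v i) * (v j * ∑ l, v l * x l) := by
    rw [Finset.mul_sum, Finset.mul_sum]
    exact Finset.sum_congr rfl fun l _ => by ring
  rw [h1, h2]
  ring

lemma hhm_smul {v : Fin n → ℝ} {c : ℝ} (hc : c ≠ 0) : hhm (fun i => c * v i) = hhm v := by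
  unfold hhm
  have hs : ∑ i, (c * v i) * (c * v i) = c ^ 2 * ∑ i, v i * v i := by
    rw [Finset.mul_sum]; exact Finset.sum_congr rfl fun i _ => by ring
  congr 1
  ext i j
  simp only [Matrix.smul_apply, Matrix.vecMulVec_apply, smul_eq_mul, hs]
  rcases eq_or_ne (∑ i, v i * v i) 0 with h | h
  · simp [h]
  · field_simp

lemma hhm_det {v : Fin n → ℝ} (h : ∑ i, v i * v i ≠ 0) : (hhm v).det = -1 := by
  have h1 : hhm v = 1 + Matrix.replicateCol (Fin 1) (fun i => (-(2 / ∑ i, v i * v i)) * v i)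
      * Matrix.replicateRow (Fin 1) v := by
    ext i j
    simp only [hhm, Matrix.add_apply, Matrix.sub_apply, Matrix.smul_apply,
      Matrix.vecMulVec_apply, Matrix.mul_apply, Matrix.replicateCol_apply, Matrix.replicateRow_apply,
      Finset.univ_unique, Finset.sum_singleton, smul_eq_mul]
    ring
  rw [h1]
  refine (Matrix.det_one_add_replicateCol_mul_replicateRow (ι := Fin 1)
    (fun i => (-(2 / ∑ i, v i * v i)) * v i) v).trans ?_
  have h2 : v ⬝ᵥ (fun i => (-(2 / ∑ i, v i * v i)) * v i) = -2 := by
    simp only [dotProduct]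
    have : ∑ i, v i * ((-(2 / ∑ i, v i * v i)) * v i)
        = (-(2 / ∑ i, v i * v i)) * ∑ i, v i * v i := by
      rw [Finset.mul_sum]; exact Finset.sum_congr rfl fun i _ => by ring
    rw [this, neg_mul, div_mul_cancel₀ _ h]
  rw [h2]; norm_num

/-- The dot with `e1`. -/
def dE (ξ : Rn n) : ℝ := ∑ i, ξ i * e1 n i

/-- Enlarged open cone. -/
def Ue (n : ℕ) (ε : ℝ) : Set (Rn n) := {ξ | ξ ≠ 0 ∧ ‖ξ‖ / 5 < ‖ξ‖ + ε * dE ξ}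

lemma continuous_dE : Continuous (dE (n := n)) := by
  unfold dE
  exact continuous_finset_sum _ fun i _ =>
    ((EuclideanSpace.proj i : Rn n →L[ℝ] ℝ).continuous).mul continuous_const

lemma isOpen_Ue (ε : ℝ) : IsOpen (Ue n ε) := by
  have h1 : IsOpen {ξ : Rn n | ξ ≠ 0} := isOpen_compl_singleton
  have h2 : IsOpen {ξ : Rn n | ‖ξ‖ / 5 < ‖ξ‖ + ε * dE ξ} :=
    isOpen_lt (continuous_norm.div_const 5)
      (continuous_norm.add (continuous_const.mul continuous_dE))
  exact h1.inter h2

lemma dE_smul (c : ℝ) (ξ : Rn n) : dE (c • ξ) = c * dE ξ := by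
  unfold dE
  rw [Finset.mul_sum]
  exact Finset.sum_congr rfl fun i _ => by
    simp [PiLp.smul_apply, smul_eq_mul]; ring

lemma mem_Ue_smul {c : ℝ} (hc : 0 < c) {ξ : Rn n} (ε : ℝ) :
    c • ξ ∈ Ue n ε ↔ ξ ∈ Ue n ε := by
  unfold Ue
  rw [Set.mem_setOf_eq, Set.mem_setOf_eq, norm_smul, dE_smul, Real.norm_eq_abs,
    abs_of_pos hc, smul_ne_zero_iff]
  constructor
  · rintro ⟨h0, h1⟩
    refine ⟨h0.2, ?_⟩
    have := (mul_lt_mul_iff_right₀ hc).mp (by linarith [h1] : c * (‖ξ‖ / 5) < c * (‖ξ‖ + ε * dE ξ))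
    linarith [this]
  · rintro ⟨h0, h1⟩
    refine ⟨⟨hc.ne', h0⟩, ?_⟩
    nlinarith [h1, hc]

lemma rotW_smul (ε : ℝ) {c : ℝ} (hc : 0 < c) (ξ : Rn n) :
    rotW ε (c • ξ) = fun i => c * rotW ε ξ i := by
  funext i
  simp only [rotW, norm_smul, Real.norm_eq_abs, abs_of_pos hc, PiLp.smul_apply, smul_eq_mul]
  ring

lemma rot_smul (ε : ℝ) {c : ℝ} (hc : 0 < c) (ξ : Rn n) : Rot ε (c • ξ) = Rot ε ξ := by
  unfold Rot
  rw [rotW_smul ε hc, hhm_smul hc.ne']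

lemma qw_eq {ε : ℝ} (hε : ε * ε = 1) (hn : 0 < n) (ξ : Rn n) :
    ∑ i, rotW ε ξ i * rotW ε ξ i = 2 * ‖ξ‖ * (‖ξ‖ + ε * dE ξ) := by
  have h : ∀ i : Fin n, rotW ε ξ i * rotW ε ξ i
      = ξ i * ξ i + (2 * (ε * ‖ξ‖)) * (ξ i * e1 n i)
        + ((ε * ‖ξ‖) * (ε * ‖ξ‖)) * (e1 n i * e1 n i) := fun i => by
    simp only [rotW]; ring
  rw [Finset.sum_congr rfl fun i _ => h i, Finset.sum_add_distrib, Finset.sum_add_distrib,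
    ← Finset.mul_sum, ← Finset.mul_sum, sum_sq_norm, sum_e1 hn]
  have : ε * ‖ξ‖ * (ε * ‖ξ‖) = ‖ξ‖ ^ 2 := by
    have : ε * ‖ξ‖ * (ε * ‖ξ‖) = (ε * ε) * (‖ξ‖ * ‖ξ‖) := by ring
    rw [this, hε, one_mul, sq]
  rw [this]
  unfold dE
  ring

lemma qw_pos {ε : ℝ} (hε : ε * ε = 1) (hn : 0 < n) {ξ : Rn n} (hξ : ξ ∈ Ue n ε) :
    0 < ∑ i, rotW ε ξ i * rotW ε ξ i := by
  rw [qw_eq hε hn]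
  have hpos : 0 < ‖ξ‖ := norm_pos_iff.mpr hξ.1
  have := hξ.2
  nlinarith

lemma sw_eq (ε : ℝ) (hn : 0 < n) (ξ : Rn n) :
    ∑ i, rotW ε ξ i * ξ i = ‖ξ‖ * (‖ξ‖ + ε * dE ξ) := by
  have h : ∀ i : Fin n, rotW ε ξ i * ξ i
      = ξ i * ξ i + (ε * ‖ξ‖) * (ξ i * e1 n i) := fun i => by simp only [rotW]; ring
  rw [Finset.sum_congr rfl fun i _ => h i, Finset.sum_add_distrib, ← Finset.mul_sum,
    sum_sq_norm]
  unfold dE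
  ring

lemma rot_orth {ε : ℝ} (hε : ε * ε = 1) (hn : 0 < n) {ξ : Rn n} (hξ : ξ ∈ Ue n ε) :
    (Rot ε ξ)ᵀ * Rot ε ξ = 1 ∧ (Rot ε ξ).det = 1 := by
  have hq : (∑ i, rotW ε ξ i * rotW ε ξ i) ≠ 0 := (qw_pos hε hn hξ).ne'
  have he : (∑ i, e1 n i * e1 n i) ≠ 0 := by rw [sum_e1 hn]; norm_num
  constructor
  · unfold Rot
    rw [Matrix.transpose_mul, hhm_transpose, hhm_transpose]
    calc hhm (e1 n) * hhm (rotW ε ξ) * (hhm (rotW ε ξ) * hhm (e1 n))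
        = hhm (e1 n) * (hhm (rotW ε ξ) * hhm (rotW ε ξ)) * hhm (e1 n) := by
          rw [mul_assoc, mul_assoc, mul_assoc]
      _ = 1 := by rw [hhm_mul_self hq, mul_one, hhm_mul_self he]
  · unfold Rot
    rw [Matrix.det_mul, hhm_det hq, hhm_det he]
    norm_num

lemma rot_mulVec {ε : ℝ} (hε : ε * ε = 1) (hn : 0 < n) {ξ : Rn n} (hξ : ξ ∈ Ue n ε) :
    (Rot ε ξ)ᵀ.mulVec (fun i => ξ i) = (ε * ‖ξ‖) • e1 n := by
  have hq : (∑ i, rotW ε ξ i * rotW ε ξ i) ≠ 0 := (qw_pos hε hn hξ).ne'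
  unfold Rot
  rw [Matrix.transpose_mul, hhm_transpose, hhm_transpose, ← Matrix.mulVec_mulVec,
    hhm_mulVec (rotW ε ξ) (fun i => ξ i)]
  have h1 : (fun i => ξ i) - ((2 * ∑ i, rotW ε ξ i * ξ i) / ∑ i, rotW ε ξ i * rotW ε ξ i)
      • rotW ε ξ = fun i => (-(ε * ‖ξ‖)) * e1 n i := by
    funext i
    have hs := sw_eq ε hn ξ
    have hQ := qw_eq hε hn ξ
    simp only [Pi.sub_apply, Pi.smul_apply, smul_eq_mul, hs, hQ]
    have hfrac : 2 * (‖ξ‖ * (‖ξ‖ + ε * dE ξ)) / (2 * ‖ξ‖ * (‖ξ‖ + ε * dE ξ)) = 1 := by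
      rw [div_eq_one_iff_eq]
      · ring
      · rw [← hQ]; exact hq
    rw [hfrac]
    simp only [rotW]
    ring
  rw [h1]
  have h2 : (fun i => (-(ε * ‖ξ‖)) * e1 n i) = (-(ε * ‖ξ‖)) • e1 n := rfl
  rw [h2, Matrix.mulVec_smul, hhm_mulVec (e1 n) (e1 n)]
  have h3 : ∑ i, e1 n i * e1 n i = 1 := sum_e1 hn
  funext i
  simp only [Pi.smul_apply, Pi.sub_apply, smul_eq_mul, h3]
  have h4 : ∑ j, e1 n j * e1 n j = 1 := h3
  ring

lemma contDiffOn_rot {ε : ℝ} (hε : ε * ε = 1) (hn : 0 < n) (j k : Fin n) :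
    ContDiffOn ℝ ((⊤ : ℕ∞) : WithTop ℕ∞) (fun ξ => Rot ε ξ j k) (Ue n ε) := by
  have hnorm : ContDiffOn ℝ ((⊤ : ℕ∞) : WithTop ℕ∞) (fun ξ : Rn n => ‖ξ‖) (Ue n ε) :=
    fun ξ hξ => (contDiffAt_norm ℝ hξ.1).contDiffWithinAt
  have hcoord : ∀ m : Fin n,
      ContDiffOn ℝ ((⊤ : ℕ∞) : WithTop ℕ∞) (fun ξ : Rn n => ξ m) (Ue n ε) := fun m =>
    (EuclideanSpace.proj m : Rn n →L[ℝ] ℝ).contDiff.contDiffOn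
  have hW : ∀ m : Fin n,
      ContDiffOn ℝ ((⊤ : ℕ∞) : WithTop ℕ∞) (fun ξ => rotW ε ξ m) (Ue n ε) := by
    intro m
    simp only [rotW]
    exact (hcoord m).add ((contDiffOn_const.mul hnorm).mul contDiffOn_const)
  have hQ : ContDiffOn ℝ ((⊤ : ℕ∞) : WithTop ℕ∞)
      (fun ξ => ∑ i, rotW ε ξ i * rotW ε ξ i) (Ue n ε) :=
    ContDiffOn.sum fun i _ => (hW i).mul (hW i)
  have hQne : ∀ ξ ∈ Ue n ε, (∑ i, rotW ε ξ i * rotW ε ξ i) ≠ 0 :=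
    fun ξ hξ => (qw_pos hε hn hξ).ne'
  have hhe : ∀ jj ll : Fin n,
      ContDiffOn ℝ ((⊤ : ℕ∞) : WithTop ℕ∞) (fun ξ => hhm (rotW ε ξ) jj ll) (Ue n ε) := by
    intro jj ll
    have heq : (fun ξ => hhm (rotW ε ξ) jj ll)
        = fun ξ => (1 : Matrix (Fin n) (Fin n) ℝ) jj ll
            - (2 / ∑ i, rotW ε ξ i * rotW ε ξ i) * (rotW ε ξ jj * rotW ε ξ ll) := by
      funext ξ
      simp [hhm, Matrix.sub_apply, Matrix.smul_apply, Matrix.vecMulVec_apply]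
    rw [heq]
    exact contDiffOn_const.sub ((contDiffOn_const.div hQ hQne).mul ((hW jj).mul (hW ll)))
  have heq2 : (fun ξ => Rot ε ξ j k) = fun ξ => ∑ l, hhm (rotW ε ξ) j l * hhm (e1 n) l k := by
    funext ξ; rw [Rot, Matrix.mul_apply]
  rw [heq2]
  exact ContDiffOn.sum fun l _ => (hhe j l).mul contDiffOn_const

/-- Scaling as a continuous linear equivalence. -/
def sclE (c : ℝ) (hc : c ≠ 0) : Rn n ≃L[ℝ] Rn n :=
  { toFun := fun x => c • x
    map_add' := smul_add c
    map_smul' := fun a x => by simp [smul_comm c a x]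
    invFun := fun x => c⁻¹ • x
    left_inv := fun x => by
      show c⁻¹ • (c • x) = x
      rw [smul_smul, inv_mul_cancel₀ hc, one_smul]
    right_inv := fun x => by
      show c • (c⁻¹ • x) = x
      rw [smul_smul, mul_inv_cancel₀ hc, one_smul]
    continuous_toFun := continuous_const_smul c
    continuous_invFun := continuous_const_smul c⁻¹ }

@[simp] lemma sclE_apply (c : ℝ) (hc : c ≠ 0) (x : Rn n) : sclE c hc x = c • x := rfl

lemma rot_bound {ε : ℝ} (hε : ε * ε = 1) (hn : 0 < n) {Γ : Set (Rn n)} (hΓo : IsOpen Γ)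
    (hΓ : ∀ ξ ∈ Γ, ξ ≠ 0 ∧ ‖ξ‖ / 4 ≤ ‖ξ‖ + ε * dE ξ) (k : ℕ) :
    ∃ C : ℝ, ∀ ξ ∈ Γ, ∀ j l : Fin n,
      ‖iteratedFDerivWithin ℝ k (fun ζ => Rot ε ζ j l) Γ ξ‖ ≤ C * ‖ξ‖ ^ (-(k : ℝ)) := by
  have hΓU : Γ ⊆ Ue n ε := by
    intro ξ hξ
    have h0 : 0 < ‖ξ‖ := norm_pos_iff.mpr (hΓ ξ hξ).1
    exact ⟨(hΓ ξ hξ).1, lt_of_lt_of_le (by linarith) (hΓ ξ hξ).2⟩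
  have hUo : IsOpen (Ue n ε) := isOpen_Ue ε
  have hUd : UniqueDiffOn ℝ (Ue n ε) := hUo.uniqueDiffOn
  set K : Set (Rn n) := Metric.sphere 0 1 ∩ {ξ | 1/4 ≤ ‖ξ‖ + ε * dE ξ} with hK
  have hKc : IsCompact K := (isCompact_sphere 0 1).inter_right
    (isClosed_le continuous_const (continuous_norm.add (continuous_const.mul continuous_dE)))
  have hKU : K ⊆ Ue n ε := by
    rintro ξ ⟨h1, h2⟩
    have hξ1 : ‖ξ‖ = 1 := by simpa using h1
    have h2' : 1/4 ≤ ‖ξ‖ + ε * dE ξ := h2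
    refine ⟨fun h => by simp [h] at hξ1, ?_⟩
    rw [hξ1] at h2' ⊢
    linarith
  have hcont : ∀ j l : Fin n, ContinuousOn
      (iteratedFDerivWithin ℝ k (fun ζ => Rot ε ζ j l) (Ue n ε)) (Ue n ε) := fun j l =>
    (contDiffOn_rot hε hn j l).continuousOn_iteratedFDerivWithin (by exact_mod_cast le_top) hUd
  have hb : ∀ j l : Fin n, ∃ C, ∀ ξ ∈ K,
      ‖iteratedFDerivWithin ℝ k (fun ζ => Rot ε ζ j l) (Ue n ε) ξ‖ ≤ C := fun j l =>
    hKc.exists_bound_of_continuousOn ((hcont j l).mono hKU)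
  choose C hC using hb
  refine ⟨∑ j, ∑ l, |C j l|, ?_⟩
  intro ξ hξ j l
  have hC0 : C j l ≤ ∑ j, ∑ l, |C j l| := by
    calc C j l ≤ |C j l| := le_abs_self _
      _ ≤ ∑ l, |C j l| := Finset.single_le_sum (f := fun l => |C j l|) (fun i _ => abs_nonneg _) (Finset.mem_univ l)
      _ ≤ ∑ j, ∑ l, |C j l| :=
          Finset.single_le_sum (f := fun j => ∑ l, |C j l|)
            (fun i _ => Finset.sum_nonneg fun _ _ => abs_nonneg _) (Finset.mem_univ j)
  have hC0nn : (0:ℝ) ≤ ∑ j, ∑ l, |C j l| :=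
    Finset.sum_nonneg fun _ _ => Finset.sum_nonneg fun _ _ => abs_nonneg _
  have hc : 0 < ‖ξ‖ := norm_pos_iff.mpr (hΓ ξ hξ).1
  have hci : 0 < ‖ξ‖⁻¹ := inv_pos.mpr hc
  have hinv : ‖ξ‖⁻¹ * ‖ξ‖ = 1 := inv_mul_cancel₀ hc.ne'
  have hω : ‖ξ‖⁻¹ • ξ ∈ K := by
    constructor
    · simp [norm_smul, abs_of_pos hci, hinv]
    · show 1/4 ≤ ‖‖ξ‖⁻¹ • ξ‖ + ε * dE (‖ξ‖⁻¹ • ξ)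
      rw [norm_smul, dE_smul, Real.norm_eq_abs, abs_of_pos hci]
      have h4 := (hΓ ξ hξ).2
      have h5 := mul_le_mul_of_nonneg_left h4 hci.le
      nlinarith [h5, hinv]
  set g := sclE (n := n) ‖ξ‖⁻¹ (inv_ne_zero hc.ne') with hg
  have hhom : ((fun ζ => Rot ε ζ j l) ∘ g) = fun ζ => Rot ε ζ j l := by
    funext ζ
    show Rot ε (‖ξ‖⁻¹ • ζ) j l = Rot ε ζ j l
    rw [rot_smul ε hci ζ]
  have hpre : (⇑g ⁻¹' Ue n ε) = Ue n ε := by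
    ext ζ
    show ‖ξ‖⁻¹ • ζ ∈ Ue n ε ↔ ζ ∈ Ue n ε
    exact mem_Ue_smul hci ε
  have hgx : g ξ ∈ Ue n ε := hKU hω
  have key := g.iteratedFDerivWithin_comp_right (fun ζ => Rot ε ζ j l) hUd hgx k
  rw [hhom, hpre] at key
  have e1' : iteratedFDerivWithin ℝ k (fun ζ => Rot ε ζ j l) Γ ξ
      = iteratedFDeriv ℝ k (fun ζ => Rot ε ζ j l) ξ :=
    iteratedFDerivWithin_of_isOpen k hΓo hξ
  have e2 : iteratedFDerivWithin ℝ k (fun ζ => Rot ε ζ j l) (Ue n ε) ξ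
      = iteratedFDeriv ℝ k (fun ζ => Rot ε ζ j l) ξ :=
    iteratedFDerivWithin_of_isOpen k hUo (hΓU hξ)
  have hgn : ‖(g : Rn n →L[ℝ] Rn n)‖ ≤ ‖ξ‖⁻¹ := by
    apply ContinuousLinearMap.opNorm_le_bound _ hci.le
    intro x
    show ‖‖ξ‖⁻¹ • x‖ ≤ ‖ξ‖⁻¹ * ‖x‖
    rw [norm_smul, Real.norm_eq_abs, abs_of_pos hci]
  calc ‖iteratedFDerivWithin ℝ k (fun ζ => Rot ε ζ j l) Γ ξ‖
      = ‖(iteratedFDerivWithin ℝ k (fun ζ => Rot ε ζ j l) (Ue n ε) (g ξ)).compContinuousLinearMap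
          fun _ => (g : Rn n →L[ℝ] Rn n)‖ := by rw [e1', ← e2, key]
    _ ≤ ‖iteratedFDerivWithin ℝ k (fun ζ => Rot ε ζ j l) (Ue n ε) (g ξ)‖
          * ∏ _i : Fin k, ‖(g : Rn n →L[ℝ] Rn n)‖ :=
        ContinuousMultilinearMap.norm_compContinuousLinearMap_le _ _
    _ ≤ (∑ j, ∑ l, |C j l|) * (‖ξ‖⁻¹) ^ k := by
        apply mul_le_mul ((hC j l _ hω).trans hC0)
        · calc ∏ _i : Fin k, ‖(g : Rn n →L[ℝ] Rn n)‖
              ≤ ∏ _i : Fin k, ‖ξ‖⁻¹ :=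
                Finset.prod_le_prod (fun _ _ => norm_nonneg _) (fun _ _ => hgn)
            _ = (‖ξ‖⁻¹) ^ k := by
                rw [Finset.prod_const, Finset.card_univ, Fintype.card_fin]
        · exact Finset.prod_nonneg fun _ _ => norm_nonneg _
        · exact hC0nn
    _ = (∑ j, ∑ l, |C j l|) * ‖ξ‖ ^ (-(k : ℝ)) := by
        rw [Real.rpow_neg hc.le, Real.rpow_natCast, inv_pow]

lemma cone_sub {ε : ℝ} {ξ : Rn n} (h0 : ξ ≠ 0) (hd : -(‖ξ‖ / Real.sqrt 2) < ε * dE ξ) :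
    ξ ≠ 0 ∧ ‖ξ‖ / 4 ≤ ‖ξ‖ + ε * dE ξ := by
  have hs : Real.sqrt 2 * Real.sqrt 2 = 2 := Real.mul_self_sqrt (by norm_num)
  have hs0 : 0 < Real.sqrt 2 := Real.sqrt_pos.mpr (by norm_num)
  have key : ‖ξ‖ / Real.sqrt 2 ≤ 3 / 4 * ‖ξ‖ := by
    rw [div_le_iff₀ hs0]
    nlinarith [norm_nonneg ξ]
  exact ⟨h0, by linarith⟩

/-- Lemma 2.1 / rotations in the frequency space: on each of the
cones `Γ₊ = {ξ ≠ 0 : ξ·e₁ > -|ξ|/√2}` and `Γ₋ = {ξ ≠ 0 : ξ·e₁ < |ξ|/√2}` there is a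
smooth, degree-zero homogeneous family of rotations `R : Γ_± → SO(n)` with
`R(ξ)ᵗ ξ = ±|ξ| e₁` whose entries satisfy the Mikhlin-type bounds
`|∂^α r_{jk}(ξ)| ≤ C_α |ξ|^{-|α|}`. -/
theorem rotations_exist (n : ℕ) (hn : 2 ≤ n) :
    (∃ R : Rn n → Matrix (Fin n) (Fin n) ℝ, IsNiceRotation (coneP n) 1 R) ∧
    (∃ R : Rn n → Matrix (Fin n) (Fin n) ℝ, IsNiceRotation (coneM n) (-1) R) := by
  have hn0 : 0 < n := by omega
  have h1 : (1:ℝ) * 1 = 1 := by norm_num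
  have hm1 : (-1:ℝ) * -1 = 1 := by norm_num
  have hPsub : ∀ ξ ∈ coneP n, ξ ≠ 0 ∧ ‖ξ‖ / 4 ≤ ‖ξ‖ + 1 * dE ξ := by
    intro ξ hξ
    refine cone_sub hξ.1 ?_
    have h2 : -(‖ξ‖ / Real.sqrt 2) < dE ξ := hξ.2
    linarith
  have hMsub : ∀ ξ ∈ coneM n, ξ ≠ 0 ∧ ‖ξ‖ / 4 ≤ ‖ξ‖ + (-1) * dE ξ := by
    intro ξ hξ
    refine cone_sub hξ.1 ?_
    have h2 : dE ξ < ‖ξ‖ / Real.sqrt 2 := hξ.2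
    linarith
  have hPU : coneP n ⊆ Ue n 1 := by
    intro ξ hξ
    have h := hPsub ξ hξ
    have h0 : 0 < ‖ξ‖ := norm_pos_iff.mpr h.1
    exact ⟨h.1, lt_of_lt_of_le (by linarith) h.2⟩
  have hMU : coneM n ⊆ Ue n (-1) := by
    intro ξ hξ
    have h := hMsub ξ hξ
    have h0 : 0 < ‖ξ‖ := norm_pos_iff.mpr h.1
    exact ⟨h.1, lt_of_lt_of_le (by linarith) h.2⟩
  have hPo : IsOpen (coneP n) := by
    have : coneP n = {ξ : Rn n | ξ ≠ 0} ∩ {ξ : Rn n | -(‖ξ‖ / Real.sqrt 2) < dE ξ} := rfl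
    rw [this]
    exact isOpen_ne.inter (isOpen_lt ((continuous_norm.div_const _).neg) continuous_dE)
  have hMo : IsOpen (coneM n) := by
    have : coneM n = {ξ : Rn n | ξ ≠ 0} ∩ {ξ : Rn n | dE ξ < ‖ξ‖ / Real.sqrt 2} := rfl
    rw [this]
    exact isOpen_ne.inter (isOpen_lt continuous_dE (continuous_norm.div_const _))
  constructor
  · exact ⟨Rot 1,
      fun j k => (contDiffOn_rot h1 hn0 j k).mono hPU,
      fun c hc ξ _ => rot_smul 1 hc ξ,
      fun ξ hξ => rot_orth h1 hn0 (hPU hξ),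
      fun ξ hξ => rot_mulVec h1 hn0 (hPU hξ),
      fun k => rot_bound h1 hn0 hPo hPsub k⟩
  · exact ⟨Rot (-1),
      fun j k => (contDiffOn_rot hm1 hn0 j k).mono hMU,
      fun c hc ξ _ => rot_smul (-1) hc ξ,
      fun ξ hξ => rot_orth hm1 hn0 (hMU hξ),
      fun ξ hξ => rot_mulVec hm1 hn0 (hMU hξ),
      fun k => rot_bound hm1 hn0 hMo hMsub k⟩

end Elastic
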